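/- For each δ > 0 there exists M^reg(δ) ∈ ℕ such that for every standard probability space (Ω,ℬ,π) (possibly with atoms), every graphon W on Ω has a δ-regular partition into at most M^reg(δ) measurable parts; that is, there is a partition 𝒫 = {P_i}_{i∈[M]} of Ω with M ≤ M^reg(δ) such that Σ_{(*)} π(P_i)² + Σ_{(**)} π(P_i)π(P_j) ≤ δ, where (*) ranges over indices i ∈ [M] for which P_i is inelegant in W, and (**) ranges over ordered pairs (i,j) ∈ [M]² with i ≠ j for which (P_i,P_j) is not a δ-regular pair in W. -/

import Mathlib

open MeasureTheory

noncomputable section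

/-- A graphon: a symmetric measurable kernel with values in `[0,1]`. -/
def IsGraphon {Ω : Type*} [MeasurableSpace Ω] (W : Ω → Ω → ℝ) : Prop :=
  Measurable (Function.uncurry W) ∧ (∀ x y, W x y = W y x) ∧
    ∀ x y, W x y ∈ Set.Icc (0 : ℝ) 1

open scoped Classical in
/-- Homomorphism density `t(T,W)` of a finite graph `T` in a kernel `W` on `(Ω,π)`. -/
def homDensity {Ω : Type*} [MeasurableSpace Ω] (π : Measure Ω) (W : Ω → Ω → ℝ)
    {k : ℕ} (T : SimpleGraph (Fin k)) : ℝ :=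
  ∫ x : Fin k → Ω,
    ∏ p ∈ Finset.univ.filter (fun p : Fin k × Fin k => p.1 < p.2 ∧ T.Adj p.1 p.2),
      W (x p.1) (x p.2) ∂(Measure.pi fun _ => π)

/-- Two graphons are fractionally isomorphic if all tree homomorphism densities agree. -/
def FracIsoGraphons {Λ Ω : Type*} [MeasurableSpace Λ] [MeasurableSpace Ω]
    (ν : Measure Λ) (U : Λ → Λ → ℝ) (π : Measure Ω) (W : Ω → Ω → ℝ) : Prop :=
  ∀ (k : ℕ) (T : SimpleGraph (Fin k)), T.IsTree → homDensity ν U T = homDensity π W T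

/-- The cut norm `‖W‖_□` of a kernel `W` on `(Ω,π)`. -/
def cutNorm {Ω : Type*} [MeasurableSpace Ω] (π : Measure Ω) (W : Ω → Ω → ℝ) : ℝ :=
  ⨆ p : {q : Set Ω × Set Ω // MeasurableSet q.1 ∧ MeasurableSet q.2},
    |∫ z in p.1.1 ×ˢ p.1.2, W z.1 z.2 ∂(π.prod π)|

/-- The cut distance `δ_□(U,W)` between `U` on `(Λ,ν)` and `W` on `(Ω,π)`:
the infimum over measure-preserving bijections `φ : Ω → Λ` of `‖U∘(φ×φ) − W‖_□`. -/
def cutDist {Λ Ω : Type*} [MeasurableSpace Λ] [MeasurableSpace Ω]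
    (ν : Measure Λ) (U : Λ → Λ → ℝ) (π : Measure Ω) (W : Ω → Ω → ℝ) : ℝ :=
  ⨅ φ : {ψ : Ω ≃ᵐ Λ // MeasurePreserving ψ π ν},
    cutNorm π fun x y => U (φ.1 x) (φ.1 y) - W x y

/-- The uniform probability measure on `[0,1) ⊆ ℝ`. -/
def graphMeasure : Measure ℝ := volume.restrict (Set.Ico (0 : ℝ) 1)

/-- The step-graphon representation `W_G` of a finite graph `G`, as a kernel on
`(ℝ, graphMeasure)`: the space is split into `|V(G)|` intervals of measure `1/|V(G)|`,
and `W_G = 1` on `Ω_u × Ω_v` iff `uv` is an edge. -/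
def graphRep {V : Type*} [Fintype V] (G : SimpleGraph V) : ℝ → ℝ → ℝ := fun x y =>
  Set.indicator
    {p : ℝ × ℝ | ∃ u v : V, G.Adj u v ∧
      p.1 ∈ Set.Ico (((Fintype.equivFin V u : ℕ) : ℝ) / (Fintype.card V))
        ((((Fintype.equivFin V u : ℕ) : ℝ) + 1) / (Fintype.card V)) ∧
      p.2 ∈ Set.Ico (((Fintype.equivFin V v : ℕ) : ℝ) / (Fintype.card V))
        ((((Fintype.equivFin V v : ℕ) : ℝ) + 1) / (Fintype.card V))}
    (fun _ => 1) (x, y)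

/-- Cut distance `δ_□(U,G) := δ_□(U, W_G)` between a graphon and a finite graph. -/
def cutDistToGraph {Λ : Type*} [MeasurableSpace Λ] (ν : Measure Λ) (U : Λ → Λ → ℝ)
    {V : Type*} [Fintype V] (G : SimpleGraph V) : ℝ :=
  cutDist ν U graphMeasure (graphRep G)

open scoped Classical in
/-- `deg_G(u;S)`: the number of neighbours of `u` inside `S`. -/
def degIn {V : Type*} (G : SimpleGraph V) (u : V) (S : Finset V) : ℕ :=
  (S.filter fun v => G.Adj u v).card

/-- `P` is an equitable partition of `G` with parameters `(p, D)`: the parts are nonempty,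
pairwise disjoint, cover the vertex set, `|P i| = p i`, and every vertex of `P i` has
exactly `D i j` neighbours in `P j` (in particular its degree into `P j` equals the
average degree into `P j` over `P i`). -/
def IsEquitablePartition {V : Type*} (G : SimpleGraph V)
    {k : ℕ} (P : Fin k → Finset V) (p : Fin k → ℕ) (D : Fin k → Fin k → ℕ) : Prop :=
  (∀ i, (P i).Nonempty) ∧ (Pairwise fun i j => Disjoint (P i) (P j)) ∧
    (∀ v : V, ∃ i, v ∈ P i) ∧ (∀ i, (P i).card = p i) ∧
    ∀ i j, ∀ u ∈ P i, degIn G u (P j) = D i j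

/-- Two finite graphs are fractionally isomorphic if they admit equitable partitions
with the same parameters. -/
def FracIsoGraphs {V V' : Type*} (G : SimpleGraph V) (H : SimpleGraph V') : Prop :=
  ∃ (k : ℕ) (P : Fin k → Finset V) (Q : Fin k → Finset V')
    (p : Fin k → ℕ) (D : Fin k → Fin k → ℕ),
      IsEquitablePartition G P p D ∧ IsEquitablePartition H Q p D

/-- The generalized degree `deg_W(x;Y) = ∫_Y W(x,y) dπ(y)`. -/
def wdeg {Ω : Type*} [MeasurableSpace Ω] (π : Measure Ω) (W : Ω → Ω → ℝ)
    (x : Ω) (Y : Set Ω) : ℝ :=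
  ∫ y in Y, W x y ∂π

/-- The density `d(C,D)` of a pair of sets in `W`. -/
def pairDensity {Ω : Type*} [MeasurableSpace Ω] (π : Measure Ω) (W : Ω → Ω → ℝ)
    (C D : Set Ω) : ℝ :=
  (∫ z in C ×ˢ D, W z.1 z.2 ∂(π.prod π)) / ((π C).toReal * (π D).toReal)

/-- `(C,D)` is a `δ`-regular pair in `W`. -/
def IsRegularPair {Ω : Type*} [MeasurableSpace Ω] (π : Measure Ω) (W : Ω → Ω → ℝ)
    (δ : ℝ) (C D : Set Ω) : Prop :=
  ∀ C' D' : Set Ω, MeasurableSet C' → MeasurableSet D' → C' ⊆ C → D' ⊆ D →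
    |(π C').toReal * (π D').toReal * pairDensity π W C D
        - ∫ z in C' ×ˢ D', W z.1 z.2 ∂(π.prod π)|
      ≤ δ * (π C).toReal * (π D).toReal

/-- `C` is elegant in `W`: almost every `x ∈ C` satisfies `deg_W(x;C) = π(C)·d(C)`. -/
def IsElegant {Ω : Type*} [MeasurableSpace Ω] (π : Measure Ω) (W : Ω → Ω → ℝ)
    (C : Set Ω) : Prop :=
  ∀ᵐ x ∂(π.restrict C), wdeg π W x C = (π C).toReal * pairDensity π W C C

/-- A `β`-robust density matrix: symmetric, with entries either `0` or in `[β, 1−β]`. -/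
def RobustDensityMatrix {M : ℕ} (β : ℝ) (𝒟 : Fin M → Fin M → ℝ) : Prop :=
  (∀ i j, 𝒟 i j = 𝒟 j i) ∧ ∀ i j, 𝒟 i j = 0 ∨ 𝒟 i j ∈ Set.Icc β (1 - β)

/-- A unit vector: entries in `[0,1]` summing to `1`. -/
def IsUnitVector {M : ℕ} (v : Fin M → ℝ) : Prop :=
  (∀ i, v i ∈ Set.Icc (0 : ℝ) 1) ∧ ∑ i, v i = 1

/-- The `(β,λ,δ,α)`-Setup. -/
def Setup4 (β lam δ α : ℝ) : Prop :=
  0 < β ∧ 0 < lam ∧ 0 < δ ∧ 0 < α ∧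
    β ≤ 1 / 1000 ∧ lam ≤ β ^ 3 / 1000 ∧ δ ≤ β ^ 2 * lam ^ 2 ∧
    β - α ∈ Set.Icc (20 * lam) (β ^ 3 / 5)

/-- The `(β,λ,δ,α,M,m)`-Setup. -/
def Setup6 (β lam δ α : ℝ) (M m : ℕ) : Prop :=
  Setup4 β lam δ α ∧
    (10 : ℝ) ^ 4 * (M : ℝ) ^ 2 * (2 : ℝ) ^ ((10 : ℝ) ^ 3 / β ^ 2)
      / (β ^ 2 * lam ^ 3 * δ ^ 4) ≤ (m : ℝ)

end
namespace RegAux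

open scoped ENNReal

noncomputable section

/-- two-term Cauchy–Schwarz with div-by-zero conventions -/
lemma cs2 {a b m n : ℝ} (hm : 0 ≤ m) (hn : 0 ≤ n) (h1 : m = 0 → a = 0)
    (h2 : n = 0 → b = 0) : (a + b) ^ 2 / (m + n) ≤ a ^ 2 / m + b ^ 2 / n := by
  rcases eq_or_lt_of_le hm with hm0 | hm0
  · rw [← hm0, h1 hm0.symm]; simp
  rcases eq_or_lt_of_le hn with hn0 | hn0
  · rw [← hn0, h2 hn0.symm]; simp
  rw [div_add_div _ _ (ne_of_gt hm0) (ne_of_gt hn0), div_le_div_iff₀ (by positivity) (by positivity)]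
  nlinarith [sq_nonneg (a * n - b * m), mul_pos hm0 hn0, sq_nonneg (a+b)]

lemma csSum {κ : Type*} (s : Finset κ) (a m : κ → ℝ) (hm : ∀ k ∈ s, 0 ≤ m k)
    (h0 : ∀ k ∈ s, m k = 0 → a k = 0) :
    (∑ k ∈ s, a k) ^ 2 / (∑ k ∈ s, m k) ≤ ∑ k ∈ s, a k ^ 2 / m k := by
  classical
  induction s using Finset.induction_on with
  | empty => simp
  | insert x s hx ih =>
    rw [Finset.sum_insert hx, Finset.sum_insert hx, Finset.sum_insert hx]
    have hms : 0 ≤ ∑ k ∈ s, m k := Finset.sum_nonneg (fun k hk => hm k (Finset.mem_insert_of_mem hk))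
    calc (a x + ∑ k ∈ s, a k) ^ 2 / (m x + ∑ k ∈ s, m k)
        ≤ a x ^ 2 / m x + (∑ k ∈ s, a k) ^ 2 / (∑ k ∈ s, m k) := by
          apply cs2 (hm x (Finset.mem_insert_self x s)) hms (h0 x (Finset.mem_insert_self x s))
          intro hs0
          have : ∀ k ∈ s, m k = 0 := by
            intro k hk
            have := Finset.sum_eq_zero_iff_of_nonneg (fun k hk => hm k (Finset.mem_insert_of_mem hk)) |>.1 hs0
            exact this k hk
          exact Finset.sum_eq_zero fun k hk => h0 k (Finset.mem_insert_of_mem hk) (this k hk)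
      _ ≤ a x ^ 2 / m x + ∑ k ∈ s, a k ^ 2 / m k := by
          gcongr
          exact ih (fun k hk => hm k (Finset.mem_insert_of_mem hk))
            (fun k hk => h0 k (Finset.mem_insert_of_mem hk))

lemma defect2 {a b m n : ℝ} (hm : 0 ≤ m) (hn : 0 ≤ n) (h1 : m = 0 → a = 0)
    (h2 : n = 0 → b = 0) :
    (a + b) ^ 2 / (m + n) + (a - m * ((a + b) / (m + n))) ^ 2 / m ≤ a ^ 2 / m + b ^ 2 / n := by
  rcases eq_or_lt_of_le hm with hm0 | hm0
  · rw [← hm0, h1 hm0.symm]; simp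
  rcases eq_or_lt_of_le hn with hn0 | hn0
  · rw [← hn0, h2 hn0.symm]
    have hm' : m + 0 ≠ 0 := by positivity
    field_simp
    nlinarith [sq_nonneg a, sq_nonneg m]
  have hmn : 0 < m + n := by positivity
  rw [show a - m * ((a + b) / (m + n)) = (a * n - b * m) / (m + n) by field_simp; ring,
    div_pow, div_div]
  have e1 : a ^ 2 / m + b ^ 2 / n - (a + b) ^ 2 / (m + n)
      = (a * n - b * m) ^ 2 / (m * n * (m + n)) := by
    field_simp; ring
  have e2 : (a * n - b * m) ^ 2 / ((m + n) ^ 2 * m) ≤ (a * n - b * m) ^ 2 / (m * n * (m + n)) := by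
    apply div_le_div_of_nonneg_left (by positivity) (by positivity)
    nlinarith [mul_pos hm0 hmn, mul_nonneg (mul_nonneg hm hm) (le_of_lt hmn)]
  linarith

lemma defect4 {a1 a2 a3 a4 m1 m2 m3 m4 : ℝ} (hm1 : 0 ≤ m1) (hm2 : 0 ≤ m2) (hm3 : 0 ≤ m3)
    (hm4 : 0 ≤ m4) (h1 : m1 = 0 → a1 = 0) (h2 : m2 = 0 → a2 = 0) (h3 : m3 = 0 → a3 = 0)
    (h4 : m4 = 0 → a4 = 0) :
    (a1 + a2 + a3 + a4) ^ 2 / (m1 + m2 + m3 + m4)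
      + (a1 - m1 * ((a1 + a2 + a3 + a4) / (m1 + m2 + m3 + m4))) ^ 2 / m1
      ≤ a1 ^ 2 / m1 + a2 ^ 2 / m2 + a3 ^ 2 / m3 + a4 ^ 2 / m4 := by
  have key : (a1 + (a2 + a3 + a4)) ^ 2 / (m1 + (m2 + m3 + m4))
      + (a1 - m1 * ((a1 + (a2 + a3 + a4)) / (m1 + (m2 + m3 + m4)))) ^ 2 / m1
      ≤ a1 ^ 2 / m1 + (a2 + a3 + a4) ^ 2 / (m2 + m3 + m4) := by
    apply defect2 hm1 (by positivity) h1
    intro h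
    have hm2' : m2 = 0 := by linarith
    have hm3' : m3 = 0 := by linarith
    have hm4' : m4 = 0 := by linarith
    rw [h2 hm2', h3 hm3', h4 hm4']; ring
  have key2 : (a2 + a3 + a4) ^ 2 / (m2 + m3 + m4) ≤ a2 ^ 2 / m2 + a3 ^ 2 / m3 + a4 ^ 2 / m4 := by
    calc (a2 + a3 + a4) ^ 2 / (m2 + m3 + m4)
        ≤ a2 ^ 2 / m2 + (a3 + a4) ^ 2 / (m3 + m4) := by
          have := cs2 (a := a2) (b := a3 + a4) (m := m2) (n := m3 + m4) hm2 (by positivity) h2 (fun h => by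
            rw [h3 (by linarith), h4 (by linarith)]; ring)
          calc (a2 + a3 + a4)^2 / (m2 + m3 + m4) = (a2 + (a3+a4))^2/(m2+(m3+m4)) := by ring_nf
            _ ≤ _ := this
      _ ≤ a2 ^ 2 / m2 + (a3 ^ 2 / m3 + a4 ^ 2 / m4) := by gcongr; exact cs2 hm3 hm4 h3 h4
      _ = _ := by ring
  calc (a1 + a2 + a3 + a4) ^ 2 / (m1 + m2 + m3 + m4)
      + (a1 - m1 * ((a1 + a2 + a3 + a4) / (m1 + m2 + m3 + m4))) ^ 2 / m1
      = (a1 + (a2 + a3 + a4)) ^ 2 / (m1 + (m2 + m3 + m4))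
      + (a1 - m1 * ((a1 + (a2 + a3 + a4)) / (m1 + (m2 + m3 + m4)))) ^ 2 / m1 := by ring_nf
    _ ≤ a1 ^ 2 / m1 + (a2 + a3 + a4) ^ 2 / (m2 + m3 + m4) := key
    _ ≤ a1 ^ 2 / m1 + (a2 ^ 2 / m2 + a3 ^ 2 / m3 + a4 ^ 2 / m4) := by gcongr
    _ = _ := by ring



variable {Ω : Type*} [MeasurableSpace Ω]

def ee (π : Measure Ω) (W : Ω → Ω → ℝ) (C D : Set Ω) : ℝ :=
  ∫ z in C ×ˢ D, W z.1 z.2 ∂(π.prod π)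

def qq (π : Measure Ω) (W : Ω → Ω → ℝ) (C D : Set Ω) : ℝ :=
  (ee π W C D) ^ 2 / ((π C).toReal * (π D).toReal)

def en (π : Measure Ω) (W : Ω → Ω → ℝ) {ι : Type*} [Fintype ι] (f : Ω → ι) : ℝ :=
  ∑ i, ∑ j, qq π W (f ⁻¹' {i}) (f ⁻¹' {j})

variable {π : Measure Ω} [IsProbabilityMeasure π] {W : Ω → Ω → ℝ}

lemma integrable_W (hW : IsGraphon W) :
    Integrable (fun z : Ω × Ω => W z.1 z.2) (π.prod π) := by
  apply (integrable_const (1 : ℝ)).mono' hW.1.aestronglyMeasurable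
  refine Filter.Eventually.of_forall fun z => ?_
  have h2 : Function.uncurry W z = W z.1 z.2 := rfl
  rw [Real.norm_eq_abs, abs_le, h2]
  have := hW.2.2 z.1 z.2
  exact ⟨by linarith [this.1], this.2⟩

lemma abs_ee_le (hW : IsGraphon W) (C D : Set Ω) :
    |ee π W C D| ≤ (π C).toReal * (π D).toReal := by
  have h := norm_setIntegral_le_of_norm_le_const (μ := π.prod π) (s := C ×ˢ D) (C := 1) (f := fun z : Ω × Ω => W z.1 z.2)
    (measure_lt_top _ _) (fun z _ => by
      rw [Real.norm_eq_abs, abs_le]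
      have := hW.2.2 z.1 z.2
      exact ⟨by linarith [this.1], this.2⟩)
  rw [Real.norm_eq_abs] at h
  calc |ee π W C D| ≤ 1 * ((π.prod π) (C ×ˢ D)).toReal := h
    _ = (π C).toReal * (π D).toReal := by
        rw [one_mul, Measure.prod_prod, ENNReal.toReal_mul]

lemma ee_nonneg (hW : IsGraphon W) (C D : Set Ω) : 0 ≤ ee π W C D :=
  integral_nonneg fun z => (hW.2.2 z.1 z.2).1

lemma ee_eq_zero (hW : IsGraphon W) {C D : Set Ω}
    (h : (π C).toReal * (π D).toReal = 0) : ee π W C D = 0 := by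
  have := abs_ee_le hW (π := π) C D
  rw [h] at this
  exact abs_eq_zero.mp (le_antisymm this (abs_nonneg _))

lemma qq_nonneg (C D : Set Ω) : 0 ≤ qq π W C D :=
  div_nonneg (sq_nonneg _) (mul_nonneg ENNReal.toReal_nonneg ENNReal.toReal_nonneg)

lemma qq_le (hW : IsGraphon W) (C D : Set Ω) :
    qq π W C D ≤ (π C).toReal * (π D).toReal := by
  set m := (π C).toReal * (π D).toReal with hm
  have hm0 : 0 ≤ m := mul_nonneg ENNReal.toReal_nonneg ENNReal.toReal_nonneg
  rcases eq_or_lt_of_le hm0 with h | h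
  · rw [qq, ← hm, ← h, div_zero]
  · rw [qq, ← hm, div_le_iff₀ h]
    have := abs_ee_le hW (π := π) C D
    rw [← hm] at this
    nlinarith [abs_nonneg (ee π W C D), sq_abs (ee π W C D)]

lemma ee_biUnion (hW : IsGraphon W) {κ β : Type*} (s : Finset κ) (t : Finset β)
    (U : κ → Set Ω) (V : β → Set Ω) (hU : ∀ k ∈ s, MeasurableSet (U k))
    (hV : ∀ l ∈ t, MeasurableSet (V l)) (hdU : Set.Pairwise ↑s (Function.onFun Disjoint U))
    (hdV : Set.Pairwise ↑t (Function.onFun Disjoint V)) :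
    ee π W (⋃ k ∈ s, U k) (⋃ l ∈ t, V l) = ∑ k ∈ s, ∑ l ∈ t, ee π W (U k) (V l) := by
  classical
  have hset : (⋃ k ∈ s, U k) ×ˢ (⋃ l ∈ t, V l)
      = ⋃ p ∈ s ×ˢ t, U (Prod.fst p) ×ˢ V (Prod.snd p) := by
    ext z
    simp only [Set.mem_prod, Set.mem_iUnion, Finset.mem_product]
    constructor
    · rintro ⟨⟨k, hk, hk'⟩, ⟨l, hl, hl'⟩⟩
      exact ⟨(k, l), ⟨hk, hl⟩, hk', hl'⟩
    · rintro ⟨p, ⟨hk, hl⟩, hk', hl'⟩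
      exact ⟨⟨p.1, hk, hk'⟩, ⟨p.2, hl, hl'⟩⟩
  have hdisj : Set.Pairwise (↑(s ×ˢ t) : Set (κ × β)) (Function.onFun Disjoint fun p : κ × β => U p.1 ×ˢ V p.2) := by
    intro p hp p' hp' hne
    simp only [Finset.coe_product, Set.mem_prod] at hp hp'
    have : p.1 ≠ p'.1 ∨ p.2 ≠ p'.2 := by
      by_contra h
      push_neg at h
      exact hne (Prod.ext h.1 h.2)
    rcases this with h | h
    · exact Set.disjoint_left.mpr fun z hz hz' =>
        Set.disjoint_left.mp (hdU hp.1 hp'.1 h) hz.1 hz'.1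
    · exact Set.disjoint_left.mpr fun z hz hz' =>
        Set.disjoint_left.mp (hdV hp.2 hp'.2 h) hz.2 hz'.2
  rw [ee, hset, integral_biUnion_finset (s ×ˢ t)
    (fun p hp => ((hU p.1 (Finset.mem_product.mp hp).1).prod (hV p.2 (Finset.mem_product.mp hp).2)))
    hdisj (fun p hp => (integrable_W hW).integrableOn), Finset.sum_product]
  rfl

lemma meas_biUnion_toReal {κ : Type*} (s : Finset κ) (U : κ → Set Ω)
    (hU : ∀ k ∈ s, MeasurableSet (U k)) (hd : Set.Pairwise ↑s (Function.onFun Disjoint U)) :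
    (π (⋃ k ∈ s, U k)).toReal = ∑ k ∈ s, (π (U k)).toReal := by
  rw [measure_biUnion_finset hd hU, ENNReal.toReal_sum (fun k _ => measure_ne_top π _)]

lemma qq_le_sum (hW : IsGraphon W) {κ β : Type*} (s : Finset κ) (t : Finset β)
    (U : κ → Set Ω) (V : β → Set Ω) (hU : ∀ k ∈ s, MeasurableSet (U k))
    (hV : ∀ l ∈ t, MeasurableSet (V l)) (hdU : Set.Pairwise ↑s (Function.onFun Disjoint U))
    (hdV : Set.Pairwise ↑t (Function.onFun Disjoint V)) :
    qq π W (⋃ k ∈ s, U k) (⋃ l ∈ t, V l) ≤ ∑ k ∈ s, ∑ l ∈ t, qq π W (U k) (V l) := by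
  classical
  have key := csSum (s ×ˢ t) (fun p => ee π W (U p.1) (V p.2))
    (fun p => (π (U p.1)).toReal * (π (V p.2)).toReal)
    (fun p _ => mul_nonneg ENNReal.toReal_nonneg ENNReal.toReal_nonneg)
    (fun p _ h => ee_eq_zero hW h)
  have ha : ∑ p ∈ s ×ˢ t, ee π W (U p.1) (V p.2) = ee π W (⋃ k ∈ s, U k) (⋃ l ∈ t, V l) := by
    rw [Finset.sum_product, ee_biUnion hW s t U V hU hV hdU hdV]
  have hm : ∑ p ∈ s ×ˢ t, (π (U p.1)).toReal * (π (V p.2)).toReal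
      = (π (⋃ k ∈ s, U k)).toReal * (π (⋃ l ∈ t, V l)).toReal := by
    rw [Finset.sum_product, meas_biUnion_toReal s U hU hdU, meas_biUnion_toReal t V hV hdV,
      Finset.sum_mul_sum]
  rw [ha, hm] at key
  calc qq π W (⋃ k ∈ s, U k) (⋃ l ∈ t, V l) ≤ ∑ p ∈ s ×ˢ t,
      (ee π W (U p.1) (V p.2)) ^ 2 / ((π (U p.1)).toReal * (π (V p.2)).toReal) := key
    _ = ∑ k ∈ s, ∑ l ∈ t, qq π W (U k) (V l) := by rw [Finset.sum_product]; rfl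

lemma fibers_disjoint {ι : Type*} (f : Ω → ι) :
    Pairwise (Function.onFun Disjoint fun i => f ⁻¹' {i}) := fun i j hne =>
  Set.disjoint_left.mpr fun x hx hx' => hne (by
    simp only [Set.mem_preimage, Set.mem_singleton_iff] at hx hx'
    rw [← hx, ← hx'])

lemma part_meas_sum {ι : Type*} [Fintype ι] (f : Ω → ι) (hf : ∀ i, MeasurableSet (f ⁻¹' {i})) :
    ∑ i, (π (f ⁻¹' {i})).toReal = 1 := by
  classical
  have hu : (⋃ i ∈ Finset.univ, f ⁻¹' {i}) = Set.univ := by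
    ext x; simp
  have := meas_biUnion_toReal (π := π) Finset.univ (fun i => f ⁻¹' {i})
    (fun i _ => hf i)
    ((fibers_disjoint f).set_pairwise _)
  rw [hu] at this
  rw [← this, measure_univ, ENNReal.toReal_one]

lemma en_nonneg {ι : Type*} [Fintype ι] (f : Ω → ι) : 0 ≤ en π W f :=
  Finset.sum_nonneg fun i _ => Finset.sum_nonneg fun j _ => qq_nonneg _ _

lemma en_le_one (hW : IsGraphon W) {ι : Type*} [Fintype ι] (f : Ω → ι)
    (hf : ∀ i, MeasurableSet (f ⁻¹' {i})) : en π W f ≤ 1 := by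
  calc en π W f ≤ ∑ i, ∑ j, (π (f ⁻¹' {i})).toReal * (π (f ⁻¹' {j})).toReal :=
        Finset.sum_le_sum fun i _ => Finset.sum_le_sum fun j _ => qq_le hW _ _
    _ = (∑ i, (π (f ⁻¹' {i})).toReal) * (∑ j, (π (f ⁻¹' {j})).toReal) := by
        rw [Finset.sum_mul_sum]
    _ = 1 := by rw [part_meas_sum f hf, one_mul]

lemma ee_empty_left (D : Set Ω) : ee π W ∅ D = 0 := by
  rw [ee, Set.empty_prod, Measure.restrict_empty, integral_zero_measure]

lemma ee_empty_right (C : Set Ω) : ee π W C ∅ = 0 := by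
  rw [ee, Set.prod_empty, Measure.restrict_empty, integral_zero_measure]

lemma qq_empty_left (D : Set Ω) : qq π W ∅ D = 0 := by
  rw [qq, ee_empty_left]; simp

lemma qq_empty_right (C : Set Ω) : qq π W C ∅ = 0 := by
  rw [qq, ee_empty_right]; simp

lemma measReal_mono {C D : Set Ω} (h : C ⊆ D) : (π C).toReal ≤ (π D).toReal :=
  ENNReal.toReal_mono (measure_ne_top π D) (measure_mono h)

lemma measReal_add {C D : Set Ω} (hC : MeasurableSet C) (h : C ⊆ D) :
    (π D).toReal = (π C).toReal + (π (D \ C)).toReal := by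
  have h1 : π (D ∩ C) + π (D \ C) = π D := measure_inter_add_diff D hC
  rw [Set.inter_eq_self_of_subset_right h] at h1
  rw [← h1, ENNReal.toReal_add (measure_ne_top π _) (measure_ne_top π _)]

lemma ee_union_left (hW : IsGraphon W) {A B Y : Set Ω} (hAB : Disjoint A B)
    (hA : MeasurableSet A) (hB : MeasurableSet B) (hY : MeasurableSet Y) :
    ee π W (A ∪ B) Y = ee π W A Y + ee π W B Y := by
  rw [ee, Set.union_prod, setIntegral_union ?_ (hB.prod hY)
    (integrable_W hW).integrableOn (integrable_W hW).integrableOn]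
  · rfl
  · exact Set.disjoint_left.mpr fun z hz hz' => Set.disjoint_left.mp hAB hz.1 hz'.1

lemma ee_union_right (hW : IsGraphon W) {Y A B : Set Ω} (hAB : Disjoint A B)
    (hA : MeasurableSet A) (hB : MeasurableSet B) (hY : MeasurableSet Y) :
    ee π W Y (A ∪ B) = ee π W Y A + ee π W Y B := by
  rw [ee, Set.prod_union, setIntegral_union ?_ (hY.prod hB)
    (integrable_W hW).integrableOn (integrable_W hW).integrableOn]
  · rfl
  · exact Set.disjoint_left.mpr fun z hz hz' => Set.disjoint_left.mp hAB hz.2 hz'.2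

lemma en_comp_equiv {ι ι' : Type*} [Fintype ι] [Fintype ι'] (e : ι ≃ ι') (f : Ω → ι) :
    en π W (fun x => e (f x)) = en π W f := by
  rw [en, en]
  refine (Fintype.sum_equiv e _ _ fun i => ?_).symm
  refine Fintype.sum_equiv e _ _ fun j => ?_
  have hfib : ∀ i : ι, (fun x => e (f x)) ⁻¹' {e i} = f ⁻¹' {i} := by
    intro i; ext x
    simp [Equiv.apply_eq_iff_eq]
  rw [hfib, hfib]

lemma elegant_of_subsingleton [MeasurableSingletonClass Ω] (hW : IsGraphon W) {C : Set Ω}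
    (hC : C.Subsingleton) : IsElegant π W C := by
  rcases hC.eq_empty_or_singleton with h | ⟨x, h⟩
  · subst h
    unfold IsElegant
    simp
  · subst h
    by_cases hx : π {x} = 0
    · unfold IsElegant
      rw [Measure.restrict_eq_zero.mpr hx]
      simp
    · have hxr : (π {x}).toReal ≠ 0 := by
        simp [ENNReal.toReal_eq_zero_iff, hx, measure_ne_top]
      unfold IsElegant
      filter_upwards [ae_restrict_mem (measurableSet_singleton x)] with y hy
      rw [Set.mem_singleton_iff] at hy
      subst hy
      have h1 : wdeg π W y {y} = (π {y}).toReal * W y y := by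
        rw [wdeg, Measure.restrict_singleton, integral_smul_measure, integral_dirac, smul_eq_mul]
      have h2 : (∫ z in ({y} ×ˢ {y} : Set (Ω × Ω)), W z.1 z.2 ∂(π.prod π))
          = (π {y}).toReal * (π {y}).toReal * W y y := by
        rw [Set.singleton_prod_singleton, Measure.restrict_singleton, integral_smul_measure,
          integral_dirac, smul_eq_mul, ← Set.singleton_prod_singleton, Measure.prod_prod,
          ENNReal.toReal_mul]
      rw [h1, pairDensity, h2]
      field_simp


open scoped Classical in
lemma step (hW : IsGraphon W) {δ : ℝ} (hδ : 0 < δ) {M : ℕ} (f : Ω → Fin M)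
    (hf : Measurable f) :
    ∃ g : Ω → Fin M × (Fin M → Bool) × (Fin M → Bool),
      Measurable g ∧ (∀ k, g ⁻¹' {k} ⊆ f ⁻¹' {k.1}) ∧
      en π W f + δ ^ 2 *
        (∑ p ∈ Finset.univ.filter (fun p : Fin M × Fin M =>
            p.1 ≠ p.2 ∧ ¬ IsRegularPair π W δ (f ⁻¹' {p.1}) (f ⁻¹' {p.2})),
          (π (f ⁻¹' {p.1})).toReal * (π (f ⁻¹' {p.2})).toReal)
        ≤ en π W g := by
  classical
  set P : Fin M → Set Ω := fun i => f ⁻¹' {i} with hPdef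
  have hP : ∀ i, MeasurableSet (P i) := fun i => hf (measurableSet_singleton i)
  set Bad : Finset (Fin M × Fin M) := Finset.univ.filter (fun p : Fin M × Fin M =>
    p.1 ≠ p.2 ∧ ¬ IsRegularPair π W δ (P p.1) (P p.2)) with hBad
  have hwit : ∀ p : Fin M × Fin M, ∃ CD : Set Ω × Set Ω,
      (MeasurableSet CD.1 ∧ MeasurableSet CD.2 ∧ CD.1 ⊆ P p.1 ∧ CD.2 ⊆ P p.2) ∧
      (p ∈ Bad → δ * (π (P p.1)).toReal * (π (P p.2)).toReal <
        |(π CD.1).toReal * (π CD.2).toReal * pairDensity π W (P p.1) (P p.2)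
          - ee π W CD.1 CD.2|) := by
    intro p
    by_cases hp : p ∈ Bad
    · have h2 : ¬ IsRegularPair π W δ (P p.1) (P p.2) := by
        rw [hBad, Finset.mem_filter] at hp; exact hp.2.2
      rw [IsRegularPair] at h2
      push_neg at h2
      obtain ⟨C', D', h1, h2', h3, h4, h5⟩ := h2
      exact ⟨(C', D'), ⟨h1, h2', h3, h4⟩, fun _ => h5⟩
    · exact ⟨(∅, ∅), ⟨MeasurableSet.empty, MeasurableSet.empty,
        Set.empty_subset _, Set.empty_subset _⟩, fun h => absurd h hp⟩
  choose CD hCD hdev using hwit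
  set Cw : Fin M → Fin M → Set Ω := fun i j => (CD (i, j)).1 with hCwdef
  set Dw : Fin M → Fin M → Set Ω := fun i j => (CD (i, j)).2 with hDwdef
  have hCwM : ∀ i j, MeasurableSet (Cw i j) := fun i j => (hCD (i, j)).1
  have hDwM : ∀ i j, MeasurableSet (Dw i j) := fun i j => (hCD (i, j)).2.1
  have hCwS : ∀ i j, Cw i j ⊆ P i := fun i j => (hCD (i, j)).2.2.1
  have hDwS : ∀ i j, Dw i j ⊆ P j := fun i j => (hCD (i, j)).2.2.2
  set g : Ω → Fin M × (Fin M → Bool) × (Fin M → Bool) := fun x =>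
    (f x, fun j => decide (x ∈ Cw (f x) j), fun i => decide (x ∈ Dw i (f x))) with hgdef
  set Q : Fin M × (Fin M → Bool) × (Fin M → Bool) → Set Ω := fun k => g ⁻¹' {k} with hQdef
  have hQsub : ∀ k, Q k ⊆ P k.1 := by
    intro k x hx
    have hgx : g x = k := hx
    show f x = k.1
    rw [← hgx]
  have hfib : ∀ k, Q k = P k.1 ∩
      ((⋂ j, (if k.2.1 j = true then Cw k.1 j else (Cw k.1 j)ᶜ)) ∩
       (⋂ j, (if k.2.2 j = true then Dw j k.1 else (Dw j k.1)ᶜ))) := by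
    intro k
    obtain ⟨i, s, t⟩ := k
    ext x
    simp only [hQdef, hgdef, Set.mem_preimage, Set.mem_singleton_iff, Prod.mk.injEq,
      Set.mem_inter_iff, Set.mem_iInter, funext_iff]
    constructor
    · rintro ⟨h1, h2, h3⟩
      refine ⟨h1, fun j => ?_, fun j => ?_⟩
      · have hj := h2 j
        rw [h1] at hj
        cases hsj : s j
        · rw [hsj] at hj
          rw [if_neg (by simp)]
          exact Set.mem_compl (by simpa using hj)
        · rw [hsj] at hj
          rw [if_pos rfl]
          simpa using hj
      · have hj := h3 j
        rw [h1] at hj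
        cases htj : t j
        · rw [htj] at hj
          rw [if_neg (by simp)]
          exact Set.mem_compl (by simpa using hj)
        · rw [htj] at hj
          rw [if_pos rfl]
          simpa using hj
    · rintro ⟨h1, h2, h3⟩
      refine ⟨h1, fun j => ?_, fun j => ?_⟩
      · have hj := h2 j
        rw [h1]
        cases hsj : s j
        · rw [hsj, if_neg (by simp)] at hj
          simpa using hj
        · rw [hsj, if_pos rfl] at hj
          simpa using hj
      · have hj := h3 j
        rw [h1]
        cases htj : t j
        · rw [htj, if_neg (by simp)] at hj
          simpa using hj
        · rw [htj, if_pos rfl] at hj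
          simpa using hj
  have hQmeas : ∀ k, MeasurableSet (Q k) := by
    intro k
    rw [hfib k]
    refine (hP _).inter (MeasurableSet.inter ?_ ?_) <;>
      refine MeasurableSet.iInter fun j => ?_
    · split
      · exact hCwM _ _
      · exact (hCwM _ _).compl
    · split
      · exact hDwM _ _
      · exact (hDwM _ _).compl
  have hgMeas : Measurable g := measurable_to_countable' fun k => hQmeas k
  -- union identities
  have hU1 : ∀ i j : Fin M,
      (⋃ k ∈ Finset.univ.filter
        (fun k : Fin M × (Fin M → Bool) × (Fin M → Bool) => k.2.1 j = true),
        (P i ∩ Q k)) = Cw i j := by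
    intro i j
    ext x
    simp only [Set.mem_iUnion, Finset.mem_filter, Finset.mem_univ, true_and,
      Set.mem_inter_iff]
    constructor
    · rintro ⟨k, hk, hxP, hxQ⟩
      have hgx : g x = k := hxQ
      have hfx : f x = i := hxP
      rw [← hgx] at hk
      have : decide (x ∈ Cw (f x) j) = true := hk
      rw [decide_eq_true_eq] at this
      rwa [hfx] at this
    · intro hx
      have hxP : x ∈ P i := hCwS i j hx
      have hfx : f x = i := hxP
      refine ⟨g x, ?_, hxP, rfl⟩
      show decide (x ∈ Cw (f x) j) = true
      rw [decide_eq_true_eq, hfx]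
      exact hx
  have hU2 : ∀ i j : Fin M,
      (⋃ k ∈ Finset.univ.filter
        (fun k : Fin M × (Fin M → Bool) × (Fin M → Bool) => ¬ (k.2.1 j = true)),
        (P i ∩ Q k)) = P i \ Cw i j := by
    intro i j
    ext x
    simp only [Set.mem_iUnion, Finset.mem_filter, Finset.mem_univ, true_and,
      Set.mem_inter_iff, Set.mem_diff]
    constructor
    · rintro ⟨k, hk, hxP, hxQ⟩
      have hgx : g x = k := hxQ
      have hfx : f x = i := hxP
      rw [← hgx] at hk
      have : ¬ (decide (x ∈ Cw (f x) j) = true) := hk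
      rw [decide_eq_true_eq] at this
      rw [hfx] at this
      exact ⟨hxP, this⟩
    · rintro ⟨hxP, hx⟩
      have hfx : f x = i := hxP
      refine ⟨g x, ?_, hxP, rfl⟩
      show ¬ (decide (x ∈ Cw (f x) j) = true)
      rw [decide_eq_true_eq, hfx]
      exact hx
  have hU3 : ∀ i j : Fin M,
      (⋃ l ∈ Finset.univ.filter
        (fun l : Fin M × (Fin M → Bool) × (Fin M → Bool) => l.2.2 i = true),
        (P j ∩ Q l)) = Dw i j := by
    intro i j
    ext x
    simp only [Set.mem_iUnion, Finset.mem_filter, Finset.mem_univ, true_and,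
      Set.mem_inter_iff]
    constructor
    · rintro ⟨l, hl, hxP, hxQ⟩
      have hgx : g x = l := hxQ
      have hfx : f x = j := hxP
      rw [← hgx] at hl
      have : decide (x ∈ Dw i (f x)) = true := hl
      rw [decide_eq_true_eq] at this
      rwa [hfx] at this
    · intro hx
      have hxP : x ∈ P j := hDwS i j hx
      have hfx : f x = j := hxP
      refine ⟨g x, ?_, hxP, rfl⟩
      show decide (x ∈ Dw i (f x)) = true
      rw [decide_eq_true_eq, hfx]
      exact hx
  have hU4 : ∀ i j : Fin M,
      (⋃ l ∈ Finset.univ.filter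
        (fun l : Fin M × (Fin M → Bool) × (Fin M → Bool) => ¬ (l.2.2 i = true)),
        (P j ∩ Q l)) = P j \ Dw i j := by
    intro i j
    ext x
    simp only [Set.mem_iUnion, Finset.mem_filter, Finset.mem_univ, true_and,
      Set.mem_inter_iff, Set.mem_diff]
    constructor
    · rintro ⟨l, hl, hxP, hxQ⟩
      have hgx : g x = l := hxQ
      have hfx : f x = j := hxP
      rw [← hgx] at hl
      have : ¬ (decide (x ∈ Dw i (f x)) = true) := hl
      rw [decide_eq_true_eq] at this
      rw [hfx] at this
      exact ⟨hxP, this⟩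
    · rintro ⟨hxP, hx⟩
      have hfx : f x = j := hxP
      refine ⟨g x, ?_, hxP, rfl⟩
      show ¬ (decide (x ∈ Dw i (f x)) = true)
      rw [decide_eq_true_eq, hfx]
      exact hx
  have hUall : ∀ i : Fin M,
      (⋃ k ∈ (Finset.univ : Finset (Fin M × (Fin M → Bool) × (Fin M → Bool))),
        (P i ∩ Q k)) = P i := by
    intro i
    ext x
    simp only [Set.mem_iUnion, Finset.mem_univ, true_and, Set.mem_inter_iff]
    constructor
    · rintro ⟨k, -, hxP, -⟩
      exact hxP
    · intro hx
      exact ⟨g x, trivial, hx, rfl⟩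
  have hblock : ∀ (i j : Fin M)
      (S T : Finset (Fin M × (Fin M → Bool) × (Fin M → Bool))),
      qq π W (⋃ k ∈ S, (P i ∩ Q k)) (⋃ l ∈ T, (P j ∩ Q l)) ≤
        ∑ k ∈ S, ∑ l ∈ T, qq π W (P i ∩ Q k) (P j ∩ Q l) := by
    intro i j S T
    apply qq_le_sum hW S T _ _ (fun k _ => (hP i).inter (hQmeas k))
      (fun l _ => (hP j).inter (hQmeas l))
    · intro a _ b _ hab
      exact ((fibers_disjoint g hab).mono Set.inter_subset_right Set.inter_subset_right)
    · intro a _ b _ hab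
      exact ((fibers_disjoint g hab).mono Set.inter_subset_right Set.inter_subset_right)
  have key : ∀ i j : Fin M,
      qq π W (P i) (P j) +
        (if (i, j) ∈ Bad then δ ^ 2 * ((π (P i)).toReal * (π (P j)).toReal) else 0)
        ≤ ∑ k, ∑ l, qq π W (P i ∩ Q k) (P j ∩ Q l) := by
    intro i j
    by_cases hb : (i, j) ∈ Bad
    swap
    · rw [if_neg hb, add_zero]
      have := hblock i j Finset.univ Finset.univ
      rwa [hUall i, hUall j] at this
    rw [if_pos hb]
    set SC := Finset.univ.filter
      (fun k : Fin M × (Fin M → Bool) × (Fin M → Bool) => k.2.1 j = true) with hSC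
    set SCc := Finset.univ.filter
      (fun k : Fin M × (Fin M → Bool) × (Fin M → Bool) => ¬ (k.2.1 j = true)) with hSCc
    set TD := Finset.univ.filter
      (fun l : Fin M × (Fin M → Bool) × (Fin M → Bool) => l.2.2 i = true) with hTD
    set TDc := Finset.univ.filter
      (fun l : Fin M × (Fin M → Bool) × (Fin M → Bool) => ¬ (l.2.2 i = true)) with hTDc
    have hLsplit : (∑ k, ∑ l, qq π W (P i ∩ Q k) (P j ∩ Q l))
        = ((∑ k ∈ SC, ∑ l ∈ TD, qq π W (P i ∩ Q k) (P j ∩ Q l))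
          + (∑ k ∈ SC, ∑ l ∈ TDc, qq π W (P i ∩ Q k) (P j ∩ Q l)))
          + ((∑ k ∈ SCc, ∑ l ∈ TD, qq π W (P i ∩ Q k) (P j ∩ Q l))
          + (∑ k ∈ SCc, ∑ l ∈ TDc, qq π W (P i ∩ Q k) (P j ∩ Q l))) := by
      have e1 : ∀ S : Finset (Fin M × (Fin M → Bool) × (Fin M → Bool)),
          (∑ k ∈ S, ∑ l, qq π W (P i ∩ Q k) (P j ∩ Q l))
          = (∑ k ∈ S, ∑ l ∈ TD, qq π W (P i ∩ Q k) (P j ∩ Q l))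
            + (∑ k ∈ S, ∑ l ∈ TDc, qq π W (P i ∩ Q k) (P j ∩ Q l)) := by
        intro S
        rw [← Finset.sum_add_distrib]
        exact Finset.sum_congr rfl fun k _ =>
          (Finset.sum_filter_add_sum_filter_not _ _ _).symm
      calc (∑ k, ∑ l, qq π W (P i ∩ Q k) (P j ∩ Q l))
          = (∑ k ∈ SC, ∑ l, qq π W (P i ∩ Q k) (P j ∩ Q l))
            + (∑ k ∈ SCc, ∑ l, qq π W (P i ∩ Q k) (P j ∩ Q l)) :=
            (Finset.sum_filter_add_sum_filter_not _ _ _).symm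
        _ = _ := by rw [e1 SC, e1 SCc]
    have b11 := hblock i j SC TD
    have b12 := hblock i j SC TDc
    have b21 := hblock i j SCc TD
    have b22 := hblock i j SCc TDc
    rw [hSC, hTD, hU1 i j, hU3 i j] at b11
    rw [hSC, hTDc, hU1 i j, hU4 i j] at b12
    rw [hSCc, hTD, hU2 i j, hU3 i j] at b21
    rw [hSCc, hTDc, hU2 i j, hU4 i j] at b22
    set c1 := (π (Cw i j)).toReal with hc1
    set c2 := (π (P i \ Cw i j)).toReal with hc2
    set d1 := (π (Dw i j)).toReal with hd1
    set d2 := (π (P j \ Dw i j)).toReal with hd2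
    set a1 := ee π W (Cw i j) (Dw i j) with ha1
    set a2 := ee π W (Cw i j) (P j \ Dw i j) with ha2
    set a3 := ee π W (P i \ Cw i j) (Dw i j) with ha3
    set a4 := ee π W (P i \ Cw i j) (P j \ Dw i j) with ha4
    have hPiU : P i = Cw i j ∪ (P i \ Cw i j) := (Set.union_diff_cancel (hCwS i j)).symm
    have hPjU : P j = Dw i j ∪ (P j \ Dw i j) := (Set.union_diff_cancel (hDwS i j)).symm
    have hsumA : ee π W (P i) (P j) = a1 + a2 + a3 + a4 := by
      calc ee π W (P i) (P j)
          = ee π W (Cw i j ∪ (P i \ Cw i j)) (P j) := by rw [← hPiU]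
        _ = ee π W (Cw i j) (P j) + ee π W (P i \ Cw i j) (P j) :=
            ee_union_left hW Set.disjoint_sdiff_right (hCwM i j)
              ((hP i).diff (hCwM i j)) (hP j)
        _ = (a1 + a2) + (a3 + a4) := by
            rw [show ee π W (Cw i j) (P j) = a1 + a2 by
                rw [ha1, ha2, ← ee_union_right hW Set.disjoint_sdiff_right (hDwM i j)
                  ((hP j).diff (hDwM i j)) (hCwM i j), ← hPjU],
              show ee π W (P i \ Cw i j) (P j) = a3 + a4 by
                rw [ha3, ha4, ← ee_union_right hW Set.disjoint_sdiff_right (hDwM i j)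
                  ((hP j).diff (hDwM i j)) ((hP i).diff (hCwM i j)), ← hPjU]]
        _ = a1 + a2 + a3 + a4 := by ring
    have hci : (π (P i)).toReal = c1 + c2 := measReal_add (hCwM i j) (hCwS i j)
    have hdj : (π (P j)).toReal = d1 + d2 := measReal_add (hDwM i j) (hDwS i j)
    have hdefect := defect4 (a1 := a1) (a2 := a2) (a3 := a3) (a4 := a4)
      (m1 := c1 * d1) (m2 := c1 * d2) (m3 := c2 * d1) (m4 := c2 * d2)
      (mul_nonneg ENNReal.toReal_nonneg ENNReal.toReal_nonneg)
      (mul_nonneg ENNReal.toReal_nonneg ENNReal.toReal_nonneg)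
      (mul_nonneg ENNReal.toReal_nonneg ENNReal.toReal_nonneg)
      (mul_nonneg ENNReal.toReal_nonneg ENNReal.toReal_nonneg)
      (fun h => ee_eq_zero hW h) (fun h => ee_eq_zero hW h)
      (fun h => ee_eq_zero hW h) (fun h => ee_eq_zero hW h)
    have hMsum : c1 * d1 + c1 * d2 + c2 * d1 + c2 * d2
        = (π (P i)).toReal * (π (P j)).toReal := by
      rw [hci, hdj]; ring
    set m := (π (P i)).toReal * (π (P j)).toReal with hm
    have hm0 : 0 ≤ m := mul_nonneg ENNReal.toReal_nonneg ENNReal.toReal_nonneg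
    have hdev' := hdev (i, j) hb
    have hpd : pairDensity π W (P i) (P j) = ee π W (P i) (P j) / m := rfl
    have hm1le : c1 * d1 ≤ m := by
      rw [hm]
      exact mul_le_mul (measReal_mono (hCwS i j)) (measReal_mono (hDwS i j))
        ENNReal.toReal_nonneg ENNReal.toReal_nonneg
    have hm1pos : 0 < c1 * d1 := by
      rcases eq_or_lt_of_le (mul_nonneg (ENNReal.toReal_nonneg (a := π (Cw i j)))
        (ENNReal.toReal_nonneg (a := π (Dw i j)))) with h0 | h0
      · exfalso
        have hz : a1 = 0 := ee_eq_zero hW h0.symm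
        rw [hpd] at hdev'
        have : |c1 * d1 * (ee π W (P i) (P j) / m) - a1| = 0 := by
          rw [hz, ← h0]; simp
        rw [this] at hdev'
        have : 0 ≤ δ * (π (P i)).toReal * (π (P j)).toReal := by positivity
        linarith
      · exact h0
    have hmpos : 0 < m := lt_of_lt_of_le hm1pos hm1le
    have hdevabs : δ * m < |a1 - c1 * d1 * (ee π W (P i) (P j) / m)| := by
      rw [abs_sub_comm]
      calc δ * m = δ * (π (P i)).toReal * (π (P j)).toReal := by rw [hm]; ring
        _ < |c1 * d1 * pairDensity π W (P i) (P j) - a1| := hdev'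
        _ = |c1 * d1 * (ee π W (P i) (P j) / m) - a1| := by rw [hpd]
    have hbonus : δ ^ 2 * m ≤ (a1 - c1 * d1 * ((a1 + a2 + a3 + a4) / (c1 * d1 + c1 * d2 + c2 * d1 + c2 * d2))) ^ 2 / (c1 * d1) := by
      rw [hMsum, ← hsumA]
      have h1 : (δ * m) ^ 2 ≤ (a1 - c1 * d1 * (ee π W (P i) (P j) / m)) ^ 2 := by
        have := pow_le_pow_left₀ (by positivity) (le_of_lt hdevabs) 2
        rwa [sq_abs] at this
      calc δ ^ 2 * m = (δ * m) ^ 2 / m := by field_simp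
        _ ≤ (δ * m) ^ 2 / (c1 * d1) := by
            apply div_le_div_of_nonneg_left (by positivity) hm1pos hm1le
        _ ≤ (a1 - c1 * d1 * (ee π W (P i) (P j) / m)) ^ 2 / (c1 * d1) :=
            (div_le_div_iff_of_pos_right hm1pos).mpr h1
    have hqP : qq π W (P i) (P j)
        = (a1 + a2 + a3 + a4) ^ 2 / (c1 * d1 + c1 * d2 + c2 * d1 + c2 * d2) := by
      rw [qq, hsumA, hMsum]
    have hq11 : (a1 : ℝ) ^ 2 / (c1 * d1) = qq π W (Cw i j) (Dw i j) := rfl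
    have hq12 : (a2 : ℝ) ^ 2 / (c1 * d2) = qq π W (Cw i j) (P j \ Dw i j) := rfl
    have hq21 : (a3 : ℝ) ^ 2 / (c2 * d1) = qq π W (P i \ Cw i j) (Dw i j) := rfl
    have hq22 : (a4 : ℝ) ^ 2 / (c2 * d2) = qq π W (P i \ Cw i j) (P j \ Dw i j) := rfl
    calc qq π W (P i) (P j) + δ ^ 2 * m
        ≤ (a1 + a2 + a3 + a4) ^ 2 / (c1 * d1 + c1 * d2 + c2 * d1 + c2 * d2)
          + (a1 - c1 * d1 * ((a1 + a2 + a3 + a4)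
              / (c1 * d1 + c1 * d2 + c2 * d1 + c2 * d2))) ^ 2 / (c1 * d1) := by
          rw [hqP]
          exact add_le_add_right hbonus _
      _ ≤ a1 ^ 2 / (c1 * d1) + a2 ^ 2 / (c1 * d2) + a3 ^ 2 / (c2 * d1)
          + a4 ^ 2 / (c2 * d2) := hdefect
      _ = qq π W (Cw i j) (Dw i j) + qq π W (Cw i j) (P j \ Dw i j)
          + qq π W (P i \ Cw i j) (Dw i j)
          + qq π W (P i \ Cw i j) (P j \ Dw i j) := by
          rw [hq11, hq12, hq21, hq22]
      _ ≤ ((∑ k ∈ SC, ∑ l ∈ TD, qq π W (P i ∩ Q k) (P j ∩ Q l))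
          + (∑ k ∈ SC, ∑ l ∈ TDc, qq π W (P i ∩ Q k) (P j ∩ Q l)))
          + ((∑ k ∈ SCc, ∑ l ∈ TD, qq π W (P i ∩ Q k) (P j ∩ Q l))
          + (∑ k ∈ SCc, ∑ l ∈ TDc, qq π W (P i ∩ Q k) (P j ∩ Q l))) := by
          have := add_le_add (add_le_add b11 b12) (add_le_add b21 b22)
          linarith
      _ = ∑ k, ∑ l, qq π W (P i ∩ Q k) (P j ∩ Q l) := hLsplit.symm
  -- reassembly of the refined energy
  have h1sum : ∀ (Y : Set Ω) k, (∑ i, qq π W (P i ∩ Q k) Y) = qq π W (Q k) Y := by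
    intro Y k
    rw [Finset.sum_eq_single k.1]
    · rw [Set.inter_eq_self_of_subset_right (hQsub k)]
    · intro i _ hne
      have hempty : P i ∩ Q k = ∅ := by
        ext x
        simp only [Set.mem_inter_iff, Set.mem_empty_iff_false, iff_false, not_and]
        intro hxP hxQ
        exact hne ((hxP : f x = i).symm.trans (hQsub k hxQ : f x = k.1))
      rw [hempty, qq_empty_left]
    · intro h
      exact absurd (Finset.mem_univ _) h
  have h2sum : ∀ (X : Set Ω) l, (∑ j, qq π W X (P j ∩ Q l)) = qq π W X (Q l) := by
    intro X l
    rw [Finset.sum_eq_single l.1]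
    · rw [Set.inter_eq_self_of_subset_right (hQsub l)]
    · intro j _ hne
      have hempty : P j ∩ Q l = ∅ := by
        ext x
        simp only [Set.mem_inter_iff, Set.mem_empty_iff_false, iff_false, not_and]
        intro hxP hxQ
        exact hne ((hxP : f x = j).symm.trans (hQsub l hxQ : f x = l.1))
      rw [hempty, qq_empty_right]
    · intro h
      exact absurd (Finset.mem_univ _) h
  have hswap : (∑ i, ∑ j, ∑ k, ∑ l, qq π W (P i ∩ Q k) (P j ∩ Q l)) = en π W g := by
    calc (∑ i, ∑ j, ∑ k, ∑ l, qq π W (P i ∩ Q k) (P j ∩ Q l))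
        = ∑ i, ∑ k, ∑ j, ∑ l, qq π W (P i ∩ Q k) (P j ∩ Q l) :=
          Finset.sum_congr rfl fun i _ => Finset.sum_comm
      _ = ∑ i, ∑ k, ∑ l, ∑ j, qq π W (P i ∩ Q k) (P j ∩ Q l) :=
          Finset.sum_congr rfl fun i _ => Finset.sum_congr rfl fun k _ => Finset.sum_comm
      _ = ∑ i, ∑ k, ∑ l, qq π W (P i ∩ Q k) (Q l) :=
          Finset.sum_congr rfl fun i _ => Finset.sum_congr rfl fun k _ =>
            Finset.sum_congr rfl fun l _ => h2sum _ l
      _ = ∑ k, ∑ i, ∑ l, qq π W (P i ∩ Q k) (Q l) := Finset.sum_comm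
      _ = ∑ k, ∑ l, ∑ i, qq π W (P i ∩ Q k) (Q l) :=
          Finset.sum_congr rfl fun k _ => Finset.sum_comm
      _ = ∑ k, ∑ l, qq π W (Q k) (Q l) :=
          Finset.sum_congr rfl fun k _ => Finset.sum_congr rfl fun l _ => h1sum _ k
      _ = en π W g := rfl
  refine ⟨g, hgMeas, hQsub, ?_⟩
  have hbonussum : δ ^ 2 * (∑ p ∈ Bad, (π (P p.1)).toReal * (π (P p.2)).toReal)
      = ∑ i, ∑ j, (if (i, j) ∈ Bad then
          δ ^ 2 * ((π (P i)).toReal * (π (P j)).toReal) else 0) := by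
    conv_lhs => rw [Finset.mul_sum, ← Finset.univ_inter Bad, ← Finset.sum_ite_mem,
      ← Finset.univ_product_univ, Finset.sum_product]
  calc en π W f + δ ^ 2 * (∑ p ∈ Bad, (π (P p.1)).toReal * (π (P p.2)).toReal)
      = ∑ i, ∑ j, (qq π W (P i) (P j)
          + (if (i, j) ∈ Bad then δ ^ 2 * ((π (P i)).toReal * (π (P j)).toReal) else 0)) := by
        rw [hbonussum]
        simp only [en]
        rw [← Finset.sum_add_distrib]
        exact Finset.sum_congr rfl fun i _ => (Finset.sum_add_distrib).symm
    _ ≤ ∑ i, ∑ j, ∑ k, ∑ l, qq π W (P i ∩ Q k) (P j ∩ Q l) :=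
        Finset.sum_le_sum fun i _ => Finset.sum_le_sum fun j _ => key i j
    _ = en π W g := hswap

def TT (m : ℕ) : ℕ := m * (2 ^ m * 2 ^ m)

lemma TT_mono : Monotone TT := by
  intro a b hab
  exact Nat.mul_le_mul hab (Nat.mul_le_mul (Nat.pow_le_pow_right (by norm_num) hab)
    (Nat.pow_le_pow_right (by norm_num) hab))

lemma le_TT (m : ℕ) : m ≤ TT m := by
  have : 1 ≤ 2 ^ m * 2 ^ m := Nat.one_le_iff_ne_zero.mpr (by positivity)
  calc m = m * 1 := (mul_one m).symm
    _ ≤ m * (2 ^ m * 2 ^ m) := Nat.mul_le_mul_left m this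

lemma le_TT_iter : ∀ (n m : ℕ), m ≤ TT^[n] m := by
  intro n
  induction n with
  | zero => intro m; simp
  | succ n ih =>
    intro m
    rw [Function.iterate_succ_apply]
    exact le_trans (le_TT m) (ih (TT m))

lemma card_kappa (M : ℕ) :
    Fintype.card (Fin M × (Fin M → Bool) × (Fin M → Bool)) = TT M := by
  simp [TT, Fintype.card_fun]

open scoped Classical in
lemma iterate_lemma [MeasurableSingletonClass Ω] (hW : IsGraphon W) {δ : ℝ} (hδ : 0 < δ) :
    ∀ (n : ℕ) (M : ℕ) (f : Ω → Fin M), Measurable f →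
    (∀ i, (f ⁻¹' {i}).Subsingleton ∨ (π (f ⁻¹' {i})).toReal ≤ δ / 2) →
    1 ≤ en π W f + n * (δ ^ 3 / 2) →
    ∃ (M' : ℕ) (f' : Ω → Fin M'), M' ≤ TT^[n] M ∧ Measurable f' ∧
      (∀ i, (f' ⁻¹' {i}).Subsingleton ∨ (π (f' ⁻¹' {i})).toReal ≤ δ / 2) ∧
      (∑ p ∈ Finset.univ.filter (fun p : Fin M' × Fin M' =>
          p.1 ≠ p.2 ∧ ¬ IsRegularPair π W δ (f' ⁻¹' {p.1}) (f' ⁻¹' {p.2})),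
        (π (f' ⁻¹' {p.1})).toReal * (π (f' ⁻¹' {p.2})).toReal) ≤ δ / 2 := by
  intro n
  induction n with
  | zero =>
    intro M f hf hinv hen
    by_cases hgood : (∑ p ∈ Finset.univ.filter (fun p : Fin M × Fin M =>
        p.1 ≠ p.2 ∧ ¬ IsRegularPair π W δ (f ⁻¹' {p.1}) (f ⁻¹' {p.2})),
        (π (f ⁻¹' {p.1})).toReal * (π (f ⁻¹' {p.2})).toReal) ≤ δ / 2
    · exact ⟨M, f, by simp, hf, hinv, hgood⟩
    · exfalso
      push_neg at hgood
      obtain ⟨g, hgM, hgsub, hgen⟩ := step (π := π) hW hδ f hf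
      have h1 : en π W g ≤ 1 := en_le_one hW g (fun k => hgM (measurableSet_singleton k))
      have h2 : 1 ≤ en π W f := by
        simpa using hen
      nlinarith [sq_nonneg δ, mul_pos (mul_pos hδ hδ) (lt_trans (by positivity) hgood)]
  | succ n ih =>
    intro M f hf hinv hen
    by_cases hgood : (∑ p ∈ Finset.univ.filter (fun p : Fin M × Fin M =>
        p.1 ≠ p.2 ∧ ¬ IsRegularPair π W δ (f ⁻¹' {p.1}) (f ⁻¹' {p.2})),
        (π (f ⁻¹' {p.1})).toReal * (π (f ⁻¹' {p.2})).toReal) ≤ δ / 2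
    · exact ⟨M, f, le_TT_iter (n + 1) M, hf, hinv, hgood⟩
    · push_neg at hgood
      obtain ⟨g, hgM, hgsub, hgen⟩ := step (π := π) hW hδ f hf
      set eq := Fintype.equivFinOfCardEq (card_kappa M) with heq
      set f' : Ω → Fin (TT M) := fun x => eq (g x) with hf'def
      have hfib : ∀ i, f' ⁻¹' {i} = g ⁻¹' {eq.symm i} := by
        intro i
        ext x
        simp only [hf'def, Set.mem_preimage, Set.mem_singleton_iff]
        exact Equiv.apply_eq_iff_eq_symm_apply eq
      have hf'M : Measurable f' := by
        apply measurable_to_countable'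
        intro i
        rw [hfib i]
        exact hgM (measurableSet_singleton _)
      have hinv' : ∀ i, (f' ⁻¹' {i}).Subsingleton ∨ (π (f' ⁻¹' {i})).toReal ≤ δ / 2 := by
        intro i
        rw [hfib i]
        have hsub : g ⁻¹' {eq.symm i} ⊆ f ⁻¹' {(eq.symm i).1} := hgsub _
        rcases hinv (eq.symm i).1 with h | h
        · exact Or.inl (Set.Subsingleton.anti h hsub)
        · exact Or.inr (le_trans (measReal_mono hsub) h)
      have hen' : 1 ≤ en π W f' + n * (δ ^ 3 / 2) := by
        have hcomp : en π W f' = en π W g := en_comp_equiv eq g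
        have hgain : en π W f + δ ^ 3 / 2 ≤ en π W g := by
          have hstep2 : δ ^ 3 / 2 ≤ δ ^ 2 *
              (∑ p ∈ Finset.univ.filter (fun p : Fin M × Fin M =>
                p.1 ≠ p.2 ∧ ¬ IsRegularPair π W δ (f ⁻¹' {p.1}) (f ⁻¹' {p.2})),
              (π (f ⁻¹' {p.1})).toReal * (π (f ⁻¹' {p.2})).toReal) := by
            nlinarith [sq_nonneg δ]
          linarith
        rw [hcomp]
        push_cast at hen ⊢
        linarith
      obtain ⟨M', f'', hle, h1, h2, h3⟩ := ih (TT M) f' hf'M hinv' hen'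
      exact ⟨M', f'', by rwa [Function.iterate_succ_apply], h1, h2, h3⟩

section Quantile

lemma uppersetMeasurable {A : Set ℝ} (h : ∀ ⦃t t' : ℝ⦄, t ≤ t' → t ∈ A → t' ∈ A) :
    MeasurableSet A := by
  by_cases hne : A.Nonempty
  · by_cases hbb : BddBelow A
    · set a := sInf A with ha
      by_cases hmem : a ∈ A
      · have : A = Set.Ici a := by
          apply Set.Subset.antisymm
          · intro t ht
            exact csInf_le hbb ht
          · intro t ht
            exact h ht hmem
        rw [this]; exact measurableSet_Ici
      · have : A = Set.Ioi a := by
          apply Set.Subset.antisymm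
          · intro t ht
            rcases eq_or_lt_of_le (csInf_le hbb ht) with he | hl
            · exact absurd (he ▸ ht : sInf A ∈ A) hmem
            · exact hl
          · intro t ht
            obtain ⟨x, hx, hxt⟩ := (csInf_lt_iff hbb hne).mp ht
            exact h (le_of_lt hxt) hx
        rw [this]; exact measurableSet_Ioi
    · have : A = Set.univ := by
        ext t
        simp only [Set.mem_univ, iff_true]
        rw [bddBelow_def] at hbb
        push_neg at hbb
        obtain ⟨x, hx, hxt⟩ := hbb t
        exact h (le_of_lt hxt) hx
      rw [this]; exact MeasurableSet.univ
  · rw [Set.not_nonempty_iff_eq_empty] at hne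
    rw [hne]; exact MeasurableSet.empty

variable (ν : Measure ℝ) [IsProbabilityMeasure ν]

def quantSet (c : ℝ) : Set ℝ := {t | ENNReal.ofReal c ≤ ν (Set.Iic t)}

lemma quantSet_nonempty {c : ℝ} (hc1 : c < 1) : (quantSet ν c).Nonempty := by
  by_contra h
  rw [Set.not_nonempty_iff_eq_empty] at h
  have hall : ∀ t : ℝ, ν (Set.Iic t) ≤ ENNReal.ofReal c := by
    intro t
    by_contra ht
    push_neg at ht
    have : t ∈ quantSet ν c := le_of_lt ht
    rw [h] at this
    exact this
  have hu : (⋃ n : ℕ, Set.Iic (n : ℝ)) = Set.univ := by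
    ext t
    simp only [Set.mem_iUnion, Set.mem_Iic, Set.mem_univ, iff_true]
    exact exists_nat_ge t
  have hmono : Monotone (fun n : ℕ => Set.Iic (n : ℝ)) := by
    intro a b hab
    exact Set.Iic_subset_Iic.mpr (by exact_mod_cast hab)
  have := hmono.measure_iUnion (μ := ν)
  rw [hu, measure_univ] at this
  have hle : (1 : ℝ≥0∞) ≤ ENNReal.ofReal c := by
    rw [this]
    exact iSup_le fun n => hall n
  have : ENNReal.ofReal c < 1 := ENNReal.ofReal_lt_one.mpr hc1
  exact absurd hle (not_le.mpr this)

lemma quantSet_bddBelow {c : ℝ} (hc0 : 0 < c) : BddBelow (quantSet ν c) := by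
  have hex : ∃ t₀ : ℝ, ν (Set.Iic t₀) < ENNReal.ofReal c := by
    by_contra h
    push_neg at h
    have hi : (⋂ n : ℕ, Set.Iic (-(n : ℝ))) = ∅ := by
      ext t
      simp only [Set.mem_iInter, Set.mem_Iic, Set.mem_empty_iff_false, iff_false, not_forall,
        not_le]
      obtain ⟨n, hn⟩ := exists_nat_gt (-t)
      exact ⟨n, by linarith⟩
    have hanti : Antitone (fun n : ℕ => Set.Iic (-(n : ℝ))) := by
      intro a b hab
      apply Set.Iic_subset_Iic.mpr
      simp only [neg_le_neg_iff]
      exact_mod_cast hab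
    have := hanti.measure_iInter (μ := ν)
      (fun n => measurableSet_Iic.nullMeasurableSet) ⟨0, measure_ne_top ν _⟩
    rw [hi, measure_empty] at this
    have h0 : ENNReal.ofReal c ≤ 0 := by
      rw [this]
      exact le_iInf fun n => h _
    have : (0 : ℝ≥0∞) < ENNReal.ofReal c := ENNReal.ofReal_pos.mpr hc0
    exact absurd h0 (not_le.mpr this)
  obtain ⟨t₀, ht₀⟩ := hex
  refine ⟨t₀, fun t ht => ?_⟩
  by_contra hlt
  push_neg at hlt
  have : ν (Set.Iic t) ≤ ν (Set.Iic t₀) := measure_mono (Set.Iic_subset_Iic.mpr (le_of_lt hlt))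
  exact absurd (le_trans ht this) (not_le.mpr ht₀)

lemma quantSet_Iic {c : ℝ} (hc0 : 0 < c) (hc1 : c < 1) :
    ENNReal.ofReal c ≤ ν (Set.Iic (sInf (quantSet ν c))) := by
  set u := sInf (quantSet ν c) with hu
  have hi : Set.Iic u = ⋂ n : ℕ, Set.Iic (u + 1 / (n + 1)) := by
    ext t
    simp only [Set.mem_Iic, Set.mem_iInter]
    constructor
    · intro ht n
      have : (0 : ℝ) < 1 / (n + 1) := by positivity
      linarith
    · intro ht
      by_contra hlt
      push_neg at hlt
      obtain ⟨n, hn⟩ := exists_nat_one_div_lt (show (0:ℝ) < t - u by linarith)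
      have := ht n
      linarith
  have hanti : Antitone (fun n : ℕ => Set.Iic (u + 1 / ((n : ℝ) + 1))) := by
    intro a b hab
    apply Set.Iic_subset_Iic.mpr
    have : (1 : ℝ) / (b + 1) ≤ 1 / (a + 1) := by
      apply div_le_div_of_nonneg_left (by norm_num) (by positivity)
      exact_mod_cast add_le_add_left (Nat.cast_le.mpr hab) 1
    linarith
  rw [hi, hanti.measure_iInter (fun n => measurableSet_Iic.nullMeasurableSet)
    ⟨0, measure_ne_top ν _⟩]
  refine le_iInf fun n => ?_
  have hlt : u < u + 1 / ((n : ℝ) + 1) := by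
    have : (0 : ℝ) < 1 / ((n : ℝ) + 1) := by positivity
    linarith
  obtain ⟨x, hx, hxlt⟩ := (csInf_lt_iff (quantSet_bddBelow ν hc0)
    (quantSet_nonempty ν hc1)).mp hlt
  exact le_trans hx (measure_mono (Set.Iic_subset_Iic.mpr (le_of_lt hxlt)))

lemma quantSet_Iio {c : ℝ} (hc0 : 0 < c) :
    ν (Set.Iio (sInf (quantSet ν c))) ≤ ENNReal.ofReal c := by
  set u := sInf (quantSet ν c) with hu
  have hi : Set.Iio u = ⋃ n : ℕ, Set.Iic (u - 1 / (n + 1)) := by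
    ext t
    simp only [Set.mem_Iio, Set.mem_iUnion, Set.mem_Iic]
    constructor
    · intro ht
      obtain ⟨n, hn⟩ := exists_nat_one_div_lt (show (0:ℝ) < u - t by linarith)
      exact ⟨n, by linarith⟩
    · rintro ⟨n, hn⟩
      have : (0 : ℝ) < 1 / ((n : ℝ) + 1) := by positivity
      linarith
  have hmono : Monotone (fun n : ℕ => Set.Iic (u - 1 / ((n : ℝ) + 1))) := by
    intro a b hab
    apply Set.Iic_subset_Iic.mpr
    have : (1 : ℝ) / (b + 1) ≤ 1 / (a + 1) := by
      apply div_le_div_of_nonneg_left (by norm_num) (by positivity)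
      exact_mod_cast add_le_add_left (Nat.cast_le.mpr hab) 1
    linarith
  rw [hi, hmono.measure_iUnion]
  refine iSup_le fun n => ?_
  by_contra h
  push_neg at h
  have hmem : u - 1 / ((n : ℝ) + 1) ∈ quantSet ν c := le_of_lt h
  have := csInf_le (quantSet_bddBelow ν hc0) hmem
  have hpos : (0 : ℝ) < 1 / ((n : ℝ) + 1) := by positivity
  rw [← hu] at this
  linarith

end Quantile

open scoped Classical in
lemma initial [StandardBorelSpace Ω] {δ : ℝ} (hδ : 0 < δ) :
    ∃ f₀ : Ω → Fin (2 * (⌈(4:ℝ)/δ⌉₊ - 1) + 1), Measurable f₀ ∧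
      ∀ i, ((f₀ ⁻¹' {i}).Subsingleton ∨ (π (f₀ ⁻¹' {i})).toReal ≤ δ / 2) := by
  set K : ℕ := ⌈(4:ℝ)/δ⌉₊ - 1 with hK
  obtain ⟨gR, hgR⟩ := exists_measurableEmbedding_real Ω
  set ν : Measure ℝ := π.map gR with hνdef
  haveI : IsProbabilityMeasure ν := Measure.isProbabilityMeasure_map hgR.measurable.aemeasurable
  have hmap : ∀ B : Set ℝ, MeasurableSet B → π (gR ⁻¹' B) = ν B := fun B hB =>
    (Measure.map_apply hgR.measurable hB).symm
  have hceil1 : 1 ≤ ⌈(4:ℝ)/δ⌉₊ := Nat.ceil_pos.mpr (by positivity)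
  have hKc : (K : ℝ) + 1 = (⌈(4:ℝ)/δ⌉₊ : ℝ) := by
    rw [hK]
    rw [Nat.cast_sub hceil1]
    push_cast
    ring
  have hcKlt : (K : ℝ) * (δ / 4) < 1 := by
    have h1 : (⌈(4:ℝ)/δ⌉₊ : ℝ) < 4 / δ + 1 := Nat.ceil_lt_add_one (by positivity)
    have h2 : (K : ℝ) < 4 / δ := by linarith [hKc]
    calc (K : ℝ) * (δ / 4) < (4 / δ) * (δ / 4) := by
          apply mul_lt_mul_of_pos_right h2 (by positivity)
      _ = 1 := by field_simp
  have hK1ge : 1 ≤ ((K : ℝ) + 1) * (δ / 4) := by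
    have h1 : (4:ℝ) / δ ≤ (⌈(4:ℝ)/δ⌉₊ : ℝ) := Nat.le_ceil _
    have h2 : (4 / δ) * (δ/4) ≤ ((K:ℝ)+1) * (δ/4) := by
      apply mul_le_mul_of_nonneg_right (by linarith [hKc]) (by positivity)
    calc (1:ℝ) = (4/δ) * (δ/4) := by field_simp
      _ ≤ _ := h2
  set c : ℕ → ℝ := fun k => (k : ℝ) * (δ / 4) with hcdef
  have hc0 : ∀ k : ℕ, 1 ≤ k → 0 < c k := by
    intro k hk
    have : (1:ℝ) ≤ (k:ℝ) := by exact_mod_cast hk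
    rw [hcdef]
    positivity
  have hc1 : ∀ k : ℕ, k ≤ K → c k < 1 := by
    intro k hk
    have hkr : (k : ℝ) ≤ (K : ℝ) := by exact_mod_cast hk
    calc c k = (k:ℝ) * (δ/4) := rfl
      _ ≤ (K:ℝ) * (δ/4) := mul_le_mul_of_nonneg_right hkr (by positivity)
      _ < 1 := hcKlt
  set u : ℕ → ℝ := fun k => sInf (quantSet ν (c k)) with hudef
  have humono : ∀ k k' : ℕ, 1 ≤ k → k ≤ k' → k' ≤ K → u k ≤ u k' := by
    intro k k' h1 h2 h3
    apply csInf_le_csInf (quantSet_bddBelow ν (hc0 k h1))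
      (quantSet_nonempty ν (hc1 k' h3))
    intro t ht
    have hcc : ENNReal.ofReal (c k) ≤ ENNReal.ofReal (c k') := by
      apply ENNReal.ofReal_le_ofReal
      apply mul_le_mul_of_nonneg_right _ (by positivity)
      exact_mod_cast h2
    exact le_trans hcc ht
  set cnt : ℝ → ℕ := fun t => ((Finset.Icc 1 K).filter (fun k => u k < t)).card with hcntdef
  have hcntmono : Monotone cnt := by
    intro t t' htt'
    apply Finset.card_le_card
    intro k hk
    rw [Finset.mem_filter] at hk ⊢
    exact ⟨hk.1, lt_of_lt_of_le hk.2 htt'⟩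
  have hcntK : ∀ t, cnt t ≤ K := by
    intro t
    calc cnt t ≤ (Finset.Icc 1 K).card := Finset.card_le_card (Finset.filter_subset _ _)
      _ = K := by rw [Nat.card_Icc]; omega
  set V : Set ℝ := ↑((Finset.Icc 1 K).image u) with hVdef
  have hVm : MeasurableSet V := ((Finset.Icc 1 K).image u).finite_toSet.measurableSet
  set val : ℝ → ℕ := fun t => if t ∈ V then 1 else 0 with hvaldef
  have hval01 : ∀ t, val t ≤ 1 := by
    intro t
    by_cases h : t ∈ V
    · simp [hvaldef, h]
    · simp [hvaldef, h]
  set idx : ℝ → ℕ := fun t => 2 * cnt t + val t with hidxdef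
  have hidxle : ∀ t, idx t ≤ 2 * K := by
    intro t
    by_cases htV : t ∈ V
    · have hv : val t = 1 := if_pos htV
      have : cnt t < K := by
        rw [hVdef] at htV
        simp only [Finset.coe_image, Set.mem_image, Finset.mem_coe] at htV
        obtain ⟨k₀, hk₀, hk₀t⟩ := htV
        have hsub : (Finset.Icc 1 K).filter (fun k => u k < t) ⊆ (Finset.Icc 1 K).erase k₀ := by
          intro k hk
          rw [Finset.mem_filter] at hk
          rw [Finset.mem_erase]
          refine ⟨?_, hk.1⟩
          intro hkk
          subst hkk
          rw [hk₀t] at hk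
          exact lt_irrefl _ hk.2
        have hK1 : 1 ≤ K := by
          rw [Finset.mem_Icc] at hk₀
          omega
        calc cnt t ≤ ((Finset.Icc 1 K).erase k₀).card := Finset.card_le_card hsub
          _ = (Finset.Icc 1 K).card - 1 := Finset.card_erase_of_mem hk₀
          _ = K - 1 := by rw [Nat.card_Icc]; omega
          _ < K := by omega
      show 2 * cnt t + val t ≤ 2 * K
      omega
    · have hv : val t = 0 := if_neg htV
      show 2 * cnt t + val t ≤ 2 * K
      have := hcntK t
      omega
  -- measurability of idx fibers
  have hcntup : ∀ n : ℕ, MeasurableSet {t : ℝ | n ≤ cnt t} :=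
    fun n => uppersetMeasurable (fun t t' h ht => le_trans ht (hcntmono h))
  have hcnteq : ∀ n : ℕ, MeasurableSet {t : ℝ | cnt t = n} := by
    intro n
    have : {t : ℝ | cnt t = n} = {t : ℝ | n ≤ cnt t} ∩ ({t : ℝ | n + 1 ≤ cnt t})ᶜ := by
      ext t
      simp only [Set.mem_setOf_eq, Set.mem_inter_iff, Set.mem_compl_iff, not_le]
      omega
    rw [this]
    exact (hcntup n).inter (hcntup (n+1)).compl
  have hidxfib : ∀ n : ℕ, idx ⁻¹' {n}
      = {t : ℝ | cnt t = n / 2} ∩ (if n % 2 = 1 then V else Vᶜ) := by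
    intro n
    ext t
    simp only [Set.mem_preimage, Set.mem_singleton_iff, Set.mem_inter_iff, Set.mem_setOf_eq]
    constructor
    · intro h
      have h' : 2 * cnt t + val t = n := h
      by_cases htV : t ∈ V
      · have hv : val t = 1 := if_pos htV
        rw [hv] at h'
        have h1 : n % 2 = 1 := by omega
        rw [if_pos h1]
        exact ⟨by omega, htV⟩
      · have hv : val t = 0 := if_neg htV
        rw [hv] at h'
        have h1 : ¬ (n % 2 = 1) := by omega
        rw [if_neg h1]
        exact ⟨by omega, htV⟩
    · rintro ⟨h2, hside⟩
      show 2 * cnt t + val t = n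
      by_cases hpar : n % 2 = 1
      · rw [if_pos hpar] at hside
        have hv : val t = 1 := if_pos hside
        omega
      · rw [if_neg hpar] at hside
        have hv : val t = 0 := if_neg hside
        omega
  have hidxm : ∀ n : ℕ, MeasurableSet (idx ⁻¹' {n}) := by
    intro n
    rw [hidxfib n]
    refine (hcnteq _).inter ?_
    split
    · exact hVm
    · exact hVm.compl
  -- the partition map
  have hidxlt : ∀ t, idx t < 2 * K + 1 := fun t => Nat.lt_succ_of_le (hidxle t)
  refine ⟨fun x => ⟨idx (gR x), hidxlt (gR x)⟩, ?_, ?_⟩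
  · apply measurable_to_countable'
    intro i
    have : (fun x => (⟨idx (gR x), hidxlt (gR x)⟩ : Fin (2 * K + 1))) ⁻¹' {i}
        = gR ⁻¹' (idx ⁻¹' {(i : ℕ)}) := by
      ext x
      simp only [Set.mem_preimage, Set.mem_singleton_iff, Fin.ext_iff]
    rw [this]
    exact hgR.measurable (hidxm _)
  intro i
  set n := (i : ℕ) with hn
  have hnle : n ≤ 2 * K := by
    have := i.isLt
    omega
  have hfib : (fun x => (⟨idx (gR x), hidxlt (gR x)⟩ : Fin (2 * K + 1))) ⁻¹' {i}
      = gR ⁻¹' (idx ⁻¹' {n}) := by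
    ext x
    simp only [Set.mem_preimage, Set.mem_singleton_iff, Fin.ext_iff]
    exact Iff.rfl
  by_cases hpar : n % 2 = 1
  · -- odd: subsingleton
    left
    rw [hfib]
    apply Set.Subsingleton.preimage _ hgR.injective
    intro t ht t' ht'
    rw [hidxfib n, if_pos hpar] at ht ht'
    obtain ⟨hcnt_t, htV⟩ := ht
    obtain ⟨hcnt_t', ht'V⟩ := ht'
    have hkey : ∀ a b : ℝ, a ∈ V → a < b → cnt a < cnt b := by
      intro a b haV hab
      rw [hVdef] at haV
      simp only [Finset.coe_image, Set.mem_image, Finset.mem_coe] at haV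
      obtain ⟨k₀, hk₀, hk₀a⟩ := haV
      have hsub : (Finset.Icc 1 K).filter (fun k => u k < a)
          ⊆ (Finset.Icc 1 K).filter (fun k => u k < b) := by
        intro k hk
        rw [Finset.mem_filter] at hk ⊢
        exact ⟨hk.1, lt_trans hk.2 hab⟩
      apply Finset.card_lt_card
      rw [Finset.ssubset_iff_of_subset hsub]
      refine ⟨k₀, ?_, ?_⟩
      · rw [Finset.mem_filter]
        exact ⟨hk₀, by rw [hk₀a]; exact hab⟩
      · rw [Finset.mem_filter]
        rintro ⟨-, hlt⟩
        rw [hk₀a] at hlt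
        exact lt_irrefl _ hlt
    have h1 : cnt t = n / 2 := hcnt_t
    have h2 : cnt t' = n / 2 := hcnt_t'
    by_contra hne
    rcases lt_or_gt_of_ne hne with hlt | hlt
    · have := hkey t t' htV hlt
      omega
    · have := hkey t' t ht'V hlt
      omega
  · -- even: small
    right
    set m := n / 2 with hm
    have hmK : m ≤ K := by omega
    have hfibR : idx ⁻¹' {n} = {t : ℝ | cnt t = m} ∩ Vᶜ := by
      rw [hidxfib n, if_neg hpar]
    have hbound : ∀ B : Set ℝ, MeasurableSet B → idx ⁻¹' {n} ⊆ B →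
        (ν B).toReal ≤ δ / 2 →
        (π ((fun x => (⟨idx (gR x), hidxlt (gR x)⟩ : Fin (2 * K + 1))) ⁻¹' {i})).toReal
          ≤ δ / 2 := by
      intro B hB hsub hle
      rw [hfib]
      calc (π (gR ⁻¹' (idx ⁻¹' {n}))).toReal ≤ (π (gR ⁻¹' B)).toReal :=
            measReal_mono (Set.preimage_mono hsub)
        _ = (ν B).toReal := by rw [hmap B hB]
        _ ≤ δ / 2 := hle
    have hIicK' : ∀ k, 1 ≤ k → k ≤ K → c k ≤ (ν (Set.Iic (u k))).toReal := by
      intro k h1 h2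
      have := quantSet_Iic ν (hc0 k h1) (hc1 k h2)
      rwa [ENNReal.ofReal_le_iff_le_toReal (measure_ne_top ν _)] at this
    have hIio' : ∀ k, 1 ≤ k → (ν (Set.Iio (u k))).toReal ≤ c k := by
      intro k h1
      exact ENNReal.toReal_le_of_le_ofReal (le_of_lt (hc0 k h1)) (quantSet_Iio ν (hc0 k h1))
    have huV : ∀ k, 1 ≤ k → k ≤ K → u k ∈ V := by
      intro k h1 h2
      rw [hVdef]
      simp only [Finset.coe_image, Set.mem_image, Finset.mem_coe]
      exact ⟨k, Finset.mem_Icc.mpr ⟨h1, h2⟩, rfl⟩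
    by_cases hK0 : K = 0
    · -- trivial: δ ≥ 4
      have hδ4 : (4:ℝ) ≤ δ := by
        have : ⌈(4:ℝ)/δ⌉₊ = 1 := by omega
        have h4 : (4:ℝ)/δ ≤ 1 := by
          have := Nat.ceil_le.mp (le_of_eq this)
          exact_mod_cast this
        rw [div_le_one hδ] at h4
        exact h4
      apply hbound Set.univ MeasurableSet.univ (Set.subset_univ _)
      rw [measure_univ, ENNReal.toReal_one]
      linarith
    have hKpos : 1 ≤ K := by omega
    -- basic facts about fiber elements
    have hmem : ∀ t ∈ idx ⁻¹' {n}, cnt t = m ∧ t ∉ V := by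
      intro t ht
      rw [hfibR] at ht
      exact ⟨ht.1, ht.2⟩
    have hlower : ∀ t ∈ idx ⁻¹' {n}, 1 ≤ m → u m < t := by
      intro t ht h1
      obtain ⟨hcntt, htV⟩ := hmem t ht
      by_contra hnot
      push_neg at hnot
      have hsub : (Finset.Icc 1 K).filter (fun k => u k < t) ⊆ Finset.Icc 1 (m - 1) := by
        intro k hk
        rw [Finset.mem_filter, Finset.mem_Icc] at hk
        rw [Finset.mem_Icc]
        obtain ⟨⟨hk1, hkK⟩, hklt⟩ := hk
        refine ⟨hk1, ?_⟩
        by_contra hge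
        push_neg at hge
        have hmk : m ≤ k := by omega
        have := humono m k h1 hmk hkK
        linarith
      have := Finset.card_le_card hsub
      rw [Nat.card_Icc] at this
      have hcnt2 : ((Finset.Icc 1 K).filter (fun k => u k < t)).card = m := hcntt
      omega
    have hupper : ∀ t ∈ idx ⁻¹' {n}, m + 1 ≤ K → t < u (m + 1) := by
      intro t ht hm1
      obtain ⟨hcntt, htV⟩ := hmem t ht
      have hle : t ≤ u (m + 1) := by
        by_contra hnot
        push_neg at hnot
        have hsub : Finset.Icc 1 (m + 1) ⊆ (Finset.Icc 1 K).filter (fun k => u k < t) := by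
          intro k hk
          rw [Finset.mem_Icc] at hk
          rw [Finset.mem_filter, Finset.mem_Icc]
          refine ⟨⟨hk.1, by omega⟩, ?_⟩
          calc u k ≤ u (m + 1) := humono k (m + 1) hk.1 hk.2 hm1
            _ < t := hnot
        have := Finset.card_le_card hsub
        rw [Nat.card_Icc] at this
        have hcnt2 : ((Finset.Icc 1 K).filter (fun k => u k < t)).card = m := hcntt
        omega
      rcases eq_or_lt_of_le hle with he | hl
      · exact absurd (he ▸ huV (m+1) (by omega) hm1) htV
      · exact hl
    by_cases hm0 : m = 0
    · -- first band
      apply hbound (Set.Iio (u 1)) measurableSet_Iio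
      · intro t ht
        obtain ⟨hcntt, htV⟩ := hmem t ht
        have hle : t ≤ u 1 := by
          by_contra hnot
          push_neg at hnot
          have h1mem : (1 : ℕ) ∈ (Finset.Icc 1 K).filter (fun k => u k < t) := by
            rw [Finset.mem_filter, Finset.mem_Icc]
            exact ⟨⟨le_refl 1, hKpos⟩, hnot⟩
          have : 1 ≤ cnt t := Finset.card_pos.mpr ⟨1, h1mem⟩
          omega
        rcases eq_or_lt_of_le hle with he | hl
        · exact absurd (he ▸ huV 1 le_rfl hKpos) htV
        · exact hl
      · have := hIio' 1 le_rfl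
        have hc1v : c 1 = δ / 4 := by
          rw [hcdef]; push_cast; ring
        rw [hc1v] at this
        linarith
    by_cases hmKeq : m = K
    · -- last band
      apply hbound (Set.Ioi (u K)) measurableSet_Ioi
      · intro t ht
        have := hlower t ht (by omega)
        rw [hmKeq] at this
        exact this
      · have hcompl : ν (Set.Ioi (u K)) = 1 - ν (Set.Iic (u K)) := by
          rw [← Set.compl_Iic, measure_compl measurableSet_Iic (measure_ne_top ν _),
            measure_univ]
        have htr : (ν (Set.Ioi (u K))).toReal = 1 - (ν (Set.Iic (u K))).toReal := by
          rw [hcompl, ENNReal.toReal_sub_of_le prob_le_one ENNReal.one_ne_top,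
            ENNReal.toReal_one]
        rw [htr]
        have h1 := hIicK' K hKpos le_rfl
        have h2 : 1 - δ / 4 ≤ c K := by
          rw [hcdef]
          simp only
          nlinarith [hK1ge]
        linarith
    -- middle band
    have hm1K : m + 1 ≤ K := by omega
    have hm1 : 1 ≤ m := by omega
    apply hbound (Set.Ioo (u m) (u (m + 1))) measurableSet_Ioo
    · intro t ht
      exact ⟨hlower t ht hm1, hupper t ht hm1K⟩
    · by_cases hcase : u m < u (m + 1)
      · have hdisj : Disjoint (Set.Iic (u m)) (Set.Ioo (u m) (u (m + 1))) := by
          rw [Set.disjoint_left]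
          intro t ht ht'
          rw [Set.mem_Iic] at ht
          rw [Set.mem_Ioo] at ht'
          linarith [ht'.1]
        have hunion : ν (Set.Iic (u m) ∪ Set.Ioo (u m) (u (m + 1)))
            = ν (Set.Iic (u m)) + ν (Set.Ioo (u m) (u (m + 1))) :=
          measure_union hdisj measurableSet_Ioo
        have hsubu : Set.Iic (u m) ∪ Set.Ioo (u m) (u (m + 1)) ⊆ Set.Iio (u (m + 1)) := by
          intro t ht
          rw [Set.mem_Iio]
          rcases ht with ht | ht
          · rw [Set.mem_Iic] at ht
            linarith
          · rw [Set.mem_Ioo] at ht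
            exact ht.2
        have hmono2 : (ν (Set.Iic (u m))).toReal + (ν (Set.Ioo (u m) (u (m + 1)))).toReal
            ≤ (ν (Set.Iio (u (m + 1)))).toReal := by
          rw [← ENNReal.toReal_add (measure_ne_top ν _) (measure_ne_top ν _), ← hunion]
          exact ENNReal.toReal_mono (measure_ne_top ν _) (measure_mono hsubu)
        have h1 := hIicK' m hm1 (by omega)
        have h2 := hIio' (m + 1) (by omega)
        have h3 : c (m + 1) - c m = δ / 4 := by
          rw [hcdef]
          push_cast
          ring
        linarith
      · rw [Set.Ioo_eq_empty hcase, measure_empty, ENNReal.toReal_zero]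
        linarith


end

end RegAux

universe u

open scoped Classical in
/-- **Theorem (regularity lemma for graphons on spaces with atoms, with elegance).**
For each `δ > 0` there is `Mreg ∈ ℕ` such that every graphon `W` on a standard
probability space `(Ω,π)` has a `δ`-regular partition into at most `Mreg` parts:
the sum of `π(P i)²` over inelegant parts plus the sum of `π(P i)π(P j)` over
ordered pairs `i ≠ j` which are not `δ`-regular is at most `δ`. -/
theorem regularity_lemma (δ : ℝ) (hδ : 0 < δ) :
    ∃ Mreg : ℕ, ∀ (Ω : Type u) [MeasurableSpace Ω] [StandardBorelSpace Ω]
      (π : Measure Ω) [IsProbabilityMeasure π] (W : Ω → Ω → ℝ), IsGraphon W →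
      ∃ (M : ℕ) (P : Fin M → Set Ω), M ≤ Mreg ∧
        (∀ i, MeasurableSet (P i)) ∧
        (Pairwise fun i j => Disjoint (P i) (P j)) ∧
        (⋃ i, P i) = Set.univ ∧
        (∑ i ∈ Finset.univ.filter (fun i : Fin M => ¬ IsElegant π W (P i)),
            ((π (P i)).toReal) ^ 2)
          + (∑ p ∈ Finset.univ.filter (fun p : Fin M × Fin M =>
                p.1 ≠ p.2 ∧ ¬ IsRegularPair π W δ (P p.1) (P p.2)),
              (π (P p.1)).toReal * (π (P p.2)).toReal) ≤ δ := by
  classical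
  set N : ℕ := ⌈(2:ℝ) / δ ^ 3⌉₊ with hN
  set M₀ : ℕ := 2 * (⌈(4:ℝ)/δ⌉₊ - 1) + 1 with hM₀
  refine ⟨RegAux.TT^[N] M₀, ?_⟩
  intro Ω _ _ π _ W hW
  obtain ⟨f₀, hf₀m, hf₀inv⟩ := RegAux.initial (π := π) hδ
  have hen : 1 ≤ RegAux.en π W f₀ + N * (δ ^ 3 / 2) := by
    have h1 : (2:ℝ) / δ ^ 3 ≤ N := Nat.le_ceil _
    have h2 : (0:ℝ) ≤ RegAux.en π W f₀ := RegAux.en_nonneg f₀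
    have h3 : (1:ℝ) ≤ N * (δ ^ 3 / 2) := by
      have hδ3 : (0:ℝ) < δ ^ 3 := by positivity
      calc (1:ℝ) = (2 / δ ^ 3) * (δ ^ 3 / 2) := by field_simp
        _ ≤ N * (δ ^ 3 / 2) := by
            apply mul_le_mul_of_nonneg_right h1 (by positivity)
    linarith
  obtain ⟨M', f', hM'le, hf'm, hf'inv, hf'good⟩ :=
    RegAux.iterate_lemma (π := π) hW hδ N M₀ f₀ hf₀m hf₀inv hen
  refine ⟨M', fun i => f' ⁻¹' {i}, hM'le, ?_, ?_, ?_, ?_⟩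
  · exact fun i => hf'm (measurableSet_singleton i)
  · exact RegAux.fibers_disjoint f'
  · ext x
    simp only [Set.mem_iUnion, Set.mem_preimage, Set.mem_singleton_iff, Set.mem_univ, iff_true]
    exact ⟨f' x, rfl⟩
  · have hel : (∑ i ∈ Finset.univ.filter (fun i : Fin M' => ¬ IsElegant π W (f' ⁻¹' {i})),
        ((π (f' ⁻¹' {i})).toReal) ^ 2) ≤ δ / 2 := by
      have hsmall : ∀ i ∈ Finset.univ.filter
          (fun i : Fin M' => ¬ IsElegant π W (f' ⁻¹' {i})),
          ((π (f' ⁻¹' {i})).toReal) ^ 2 ≤ (δ / 2) * (π (f' ⁻¹' {i})).toReal := by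
        intro i hi
        rw [Finset.mem_filter] at hi
        have hple : (π (f' ⁻¹' {i})).toReal ≤ δ / 2 := by
          rcases hf'inv i with h | h
          · exact absurd (RegAux.elegant_of_subsingleton hW h) hi.2
          · exact h
        rw [sq]
        exact mul_le_mul_of_nonneg_right hple ENNReal.toReal_nonneg
      calc (∑ i ∈ Finset.univ.filter (fun i : Fin M' => ¬ IsElegant π W (f' ⁻¹' {i})),
          ((π (f' ⁻¹' {i})).toReal) ^ 2)
          ≤ ∑ i ∈ Finset.univ.filter (fun i : Fin M' => ¬ IsElegant π W (f' ⁻¹' {i})),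
            (δ / 2) * (π (f' ⁻¹' {i})).toReal := Finset.sum_le_sum hsmall
        _ ≤ ∑ i : Fin M', (δ / 2) * (π (f' ⁻¹' {i})).toReal := by
            apply Finset.sum_le_sum_of_subset_of_nonneg (Finset.filter_subset _ _)
            intro i _ _
            positivity
        _ = (δ / 2) * ∑ i : Fin M', (π (f' ⁻¹' {i})).toReal := by rw [Finset.mul_sum]
        _ = δ / 2 := by
            rw [RegAux.part_meas_sum f' (fun i => hf'm (measurableSet_singleton i)), mul_one]
    linarith [hf'good]
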